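/- Let f: A → B be a surjective rack homomorphism. Then the relation C₁(f) on A — generated as an equivalence relation by the pairs ((x ◁ a) ◁⁻¹ b, x) for x, a, b ∈ A with f(a) = f(b) — is compatible with the rack operation, is contained in the kernel pair of f, and the induced map A/C₁(f) → B is a covering. -/
import Mathlib


/-- A rack: a set with operations `◁`, `◁⁻¹` satisfying (R1) and (R2). -/
class PaperRack (X : Type*) where
  act : X → X → X
  inv : X → X → X
  r1a : ∀ x y, inv (act x y) y = x
  r1b : ∀ x y, act (inv x y) y = x
  r2 : ∀ x y z, act (act x y) z = act (act x z) (act y z)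

infixl:70 " ◁ " => PaperRack.act
infixl:70 " ◁⁻¹ " => PaperRack.inv

/-- The centralizing relation `C₁(f)`: the equivalence relation on `A` generated
by the pairs `((x ◁ a) ◁⁻¹ b, x)` with `f a = f b`. -/
def C1 {A B : Type*} [PaperRack A] (f : A → B) : A → A → Prop :=
  Relation.EqvGen fun u v => ∃ x a b : A, f a = f b ∧ u = (x ◁ a) ◁⁻¹ b ∧ v = x

/-- Distributivity of `◁⁻¹` over right translation. -/
lemma paperrack_dist {A : Type*} [PaperRack A] (x y z : A) :
    (x ◁⁻¹ y) ◁ z = (x ◁ z) ◁⁻¹ (y ◁ z) := by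
  have h : ((x ◁⁻¹ y) ◁ z) ◁ (y ◁ z) = x ◁ z := by
    rw [← PaperRack.r2, PaperRack.r1b]
  calc (x ◁⁻¹ y) ◁ z = (((x ◁⁻¹ y) ◁ z) ◁ (y ◁ z)) ◁⁻¹ (y ◁ z) := by
        rw [PaperRack.r1a]
    _ = (x ◁ z) ◁⁻¹ (y ◁ z) := by rw [h]

/-- `C₁(f)` is contained in the kernel pair of `f`. -/
lemma C1_ker {A B : Type*} [PaperRack A] [PaperRack B] (f : A → B)
    (hact : ∀ x y : A, f (x ◁ y) = f x ◁ f y)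
    (hinv : ∀ x y : A, f (x ◁⁻¹ y) = f x ◁⁻¹ f y)
    {a b : A} (h : C1 f a b) : f a = f b := by
  induction h with
  | rel u v huv =>
    obtain ⟨x, p, q, hpq, rfl, rfl⟩ := huv
    rw [hinv, hact, hpq, PaperRack.r1a]
  | refl => rfl
  | symm _ _ _ ih => exact ih.symm
  | trans _ _ _ _ _ ih1 ih2 => exact ih1.trans ih2

/-- Right compatibility of `C₁(f)` with the rack operation. -/
lemma C1_act_right {A B : Type*} [PaperRack A] [PaperRack B] (f : A → B)
    (hact : ∀ x y : A, f (x ◁ y) = f x ◁ f y)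
    {a b : A} (c : A) (h : C1 f a b) : C1 f (a ◁ c) (b ◁ c) := by
  induction h with
  | rel u v huv =>
    obtain ⟨y, p, q, hpq, rfl, rfl⟩ := huv
    refine Relation.EqvGen.rel _ _ ⟨v ◁ c, p ◁ c, q ◁ c, ?_, ?_, rfl⟩
    · rw [hact, hact, hpq]
    · rw [paperrack_dist, PaperRack.r2]
  | refl x => exact Relation.EqvGen.refl _
  | symm _ _ _ ih => exact Relation.EqvGen.symm _ _ ih
  | trans _ _ _ _ _ ih1 ih2 => exact Relation.EqvGen.trans _ _ _ ih1 ih2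

/-- Left compatibility: if `f c = f d` then `x ◁ c` and `x ◁ d` are `C₁`-related. -/
lemma C1_act_left {A B : Type*} [PaperRack A] [PaperRack B] (f : A → B)
    (hact : ∀ x y : A, f (x ◁ y) = f x ◁ f y)
    (x : A) {c d : A} (h : f c = f d) : C1 f (x ◁ c) (x ◁ d) := by
  have h1 : C1 f ((x ◁ c) ◁⁻¹ d) x := Relation.EqvGen.rel _ _ ⟨x, c, d, h, rfl, rfl⟩
  have h2 := C1_act_right f hact d h1
  rw [PaperRack.r1b] at h2
  exact h2

/-- For a surjective rack homomorphism `f : A → B`, the relation `C₁(f)` is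
compatible with the rack operation, is contained in the kernel pair of `f`,
and the induced map `A/C₁(f) → B` is a covering. -/
theorem centralization_is_covering {A B : Type*} [PaperRack A] [PaperRack B]
    (f : A → B)
    (hact : ∀ x y : A, f (x ◁ y) = f x ◁ f y)
    (hinv : ∀ x y : A, f (x ◁⁻¹ y) = f x ◁⁻¹ f y)
    (hsurj : Function.Surjective f) :
    (∀ a b c d : A, C1 f a b → C1 f c d → C1 f (a ◁ c) (b ◁ d)) ∧
    (∀ a b : A, C1 f a b → f a = f b) ∧
    (∃ g : Quot (C1 f) → B,
      (∀ a : A, g (Quot.mk (C1 f) a) = f a) ∧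
      Function.Surjective g ∧
      ∀ x a b : A, g (Quot.mk (C1 f) a) = g (Quot.mk (C1 f) b) →
        Quot.mk (C1 f) ((x ◁ a) ◁⁻¹ b) = Quot.mk (C1 f) x) := by
  refine ⟨?_, fun a b h => C1_ker f hact hinv h, ?_⟩
  · intro a b c d hab hcd
    exact Relation.EqvGen.trans _ _ _
      (C1_act_left f hact a (C1_ker f hact hinv hcd))
      (C1_act_right f hact d hab)
  · refine ⟨Quot.lift f (fun a b h => C1_ker f hact hinv h), fun a => rfl, ?_, ?_⟩
    · intro b; obtain ⟨a, rfl⟩ := hsurj b; exact ⟨Quot.mk _ a, rfl⟩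
    · intro x a b h
      exact Quot.sound (Relation.EqvGen.rel _ _ ⟨x, a, b, h, rfl, rfl⟩)
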